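/- Let J be a nonempty finite set of positive integers. The symmetric matrix (1/(j+k-1))_{j,k ∈ J} is positive definite, hence invertible. -/

import Mathlib

open Polynomial MeasureTheory Matrix

lemma poly_sq_integral_pos (p : ℝ[X]) (hp : p ≠ 0) :
    0 < ∫ t in (0:ℝ)..1, (p.eval t)^2 := by
  have hint : IntervalIntegrable (fun t => (p.eval t)^2) volume 0 1 :=
    ((p.continuous_aeval).pow 2).intervalIntegrable 0 1
  rw [intervalIntegral.integral_pos_iff_support_of_nonneg_ae
    (Filter.Eventually.of_forall fun t => sq_nonneg _) hint]
  refine ⟨one_pos, ?_⟩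
  have hroots : (volume ({x | p.IsRoot x} : Set ℝ)) = 0 :=
    (Polynomial.finite_setOf_isRoot hp).measure_zero _
  have hsub : Set.Ioc (0:ℝ) 1 \ {x | p.IsRoot x}
      ⊆ (Function.support fun t => (p.eval t)^2) ∩ Set.Ioc 0 1 := by
    rintro t ⟨ht, hr⟩
    refine ⟨?_, ht⟩
    simp only [Function.mem_support]
    simpa [pow_eq_zero_iff] using hr
  calc (0:ENNReal) < 1 := by norm_num
    _ = volume (Set.Ioc (0:ℝ) 1 \ {x | p.IsRoot x}) := by
        rw [measure_diff_null hroots]; simp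
    _ ≤ _ := measure_mono hsub

lemma mono_integral (a b : ℕ) (c d : ℝ) :
    ∫ t in (0:ℝ)..1, (c * t^a) * (d * t^b) = c * d / (((a+b:ℕ):ℝ)+1) := by
  have h : ∀ t:ℝ, (c*t^a)*(d*t^b) = (c*d) * t^(a+b) := fun t => by ring
  simp_rw [h]
  rw [intervalIntegral.integral_const_mul, integral_pow]
  push_cast
  norm_num
  ring

theorem stmt3 (J : Finset ℕ) (hJ : J.Nonempty) (hpos : ∀ j ∈ J, 0 < j) :
    (Matrix.of fun j k : J => (1 : ℝ) / ((j : ℕ) + (k : ℕ) - 1 : ℝ)).PosDef ∧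
      IsUnit (Matrix.of fun j k : J => (1 : ℝ) / ((j : ℕ) + (k : ℕ) - 1 : ℝ)).det := by
  set M := (Matrix.of fun j k : J => (1 : ℝ) / ((j : ℕ) + (k : ℕ) - 1 : ℝ)) with hM
  have hherm : M.IsHermitian := by
    ext j k
    simp [hM, Matrix.conjTranspose, Matrix.transpose]
    ring_nf
  have hpd : M.PosDef := by
    refine Matrix.PosDef.of_dotProduct_mulVec_pos hherm fun x hx => ?_
    set p : ℝ[X] := ∑ j : J, C (x j) * X^((j:ℕ)-1) with hp
    have hone : ∀ j : J, 1 ≤ (j:ℕ) := fun j => hpos j j.2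
    -- p ≠ 0
    have hpne : p ≠ 0 := by
      obtain ⟨j₀, hj₀⟩ := Function.ne_iff.mp hx
      simp only [Pi.zero_apply] at hj₀
      intro h0
      apply hj₀
      have : p.coeff ((j₀:ℕ)-1) = x j₀ := by
        rw [hp, Polynomial.finset_sum_coeff]
        rw [Finset.sum_eq_single j₀]
        · simp [Polynomial.coeff_C_mul, Polynomial.coeff_X_pow]
        · intro j _ hjne
          have : (j:ℕ)-1 ≠ (j₀:ℕ)-1 := by
            intro he
            exact hjne (Subtype.ext (by have := hone j; have := hone j₀; omega))
          simp [Polynomial.coeff_C_mul, Polynomial.coeff_X_pow, Ne.symm this]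
        · simp
      rw [h0] at this
      simpa using this.symm
    -- cast fact
    have hcast : ∀ j k : J, ((((j:ℕ)-1) + ((k:ℕ)-1) : ℕ) : ℝ) + 1
        = ((j:ℕ):ℝ) + ((k:ℕ):ℝ) - 1 := by
      intro j k
      have hj := hone j; have hk := hone k
      have h2 : ((j:ℕ)-1) + ((k:ℕ)-1) = (j:ℕ)+(k:ℕ)-1-1 := by omega
      rw [h2, Nat.cast_sub (by omega), Nat.cast_sub (by omega)]
      push_cast; ring
    -- quadratic form equals integral
    have hqf : star x ⬝ᵥ M *ᵥ x = ∫ t in (0:ℝ)..1, (p.eval t)^2 := by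
      have heval : ∀ t : ℝ, p.eval t = ∑ j : J, x j * t^((j:ℕ)-1) := by
        intro t; rw [hp]; simp [Polynomial.eval_finset_sum]
      calc star x ⬝ᵥ M *ᵥ x
          = ∑ j : J, ∑ k : J, x j * ((1:ℝ)/(((j:ℕ):ℝ)+((k:ℕ):ℝ)-1)) * x k := by
            simp [dotProduct, Matrix.mulVec, Finset.mul_sum, hM, mul_assoc]
        _ = ∑ j : J, ∑ k : J,
            ∫ t in (0:ℝ)..1, (x j * t^((j:ℕ)-1)) * (x k * t^((k:ℕ)-1)) := by
            refine Finset.sum_congr rfl fun j _ => Finset.sum_congr rfl fun k _ => ?_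
            rw [mono_integral, hcast j k]
            ring
        _ = ∫ t in (0:ℝ)..1, ∑ j : J, ∑ k : J,
            (x j * t^((j:ℕ)-1)) * (x k * t^((k:ℕ)-1)) := by
            rw [intervalIntegral.integral_finset_sum]
            · refine Finset.sum_congr rfl fun j _ => ?_
              rw [intervalIntegral.integral_finset_sum]
              intro k _
              exact (((continuous_const.mul (continuous_pow _)).mul
                (continuous_const.mul (continuous_pow _))).intervalIntegrable 0 1)
            · intro j _
              refine Continuous.intervalIntegrable ?_ 0 1
              exact continuous_finset_sum _ fun k _ =>
                (continuous_const.mul (continuous_pow _)).mul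
                  (continuous_const.mul (continuous_pow _))
        _ = ∫ t in (0:ℝ)..1, (p.eval t)^2 := by
            refine intervalIntegral.integral_congr fun t _ => ?_
            rw [heval t, sq, Finset.sum_mul_sum]
    rw [hqf]
    exact poly_sq_integral_pos p hpne
  exact ⟨hpd, isUnit_iff_ne_zero.mpr (ne_of_gt hpd.det_pos)⟩
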